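/- If c > 0, then 0 < p < 1 and E[max(X_1, …, X_n)] ≥ μ + (p − p^n)·c/2. -/

import Mathlib

open MeasureTheory ProbabilityTheory Finset

/-- Let `X_0, …, X_n` be i.i.d. random variables taking values in `[0,1]`, with mean
`μ`, variance `c` and `p = P(X_0 < μ)`.  If `c > 0` then `0 < p < 1` and
`E[max(X_0, …, X_n)] ≥ μ + (p − p^{n+1})·c/2`. -/
theorem expected_max_of_iid_positive_variance
    {Ω : Type} [MeasurableSpace Ω] (P : Measure Ω) [IsProbabilityMeasure P]
    (n : ℕ) (X : Fin (n + 1) → Ω → ℝ)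
    (hmeas : ∀ i, Measurable (X i))
    (hrange : ∀ i ω, X i ω ∈ Set.Icc (0 : ℝ) 1)
    (hindep : iIndepFun X P)
    (hident : ∀ i, Measure.map (X i) P = Measure.map (X 0) P)
    (hc : 0 < variance (X 0) P) :
    (0 < (P {ω | X 0 ω < ∫ ω', X 0 ω' ∂P}).toReal ∧
      (P {ω | X 0 ω < ∫ ω', X 0 ω' ∂P}).toReal < 1) ∧
    (∫ ω', X 0 ω' ∂P) +
        ((P {ω | X 0 ω < ∫ ω', X 0 ω' ∂P}).toReal -
          (P {ω | X 0 ω < ∫ ω', X 0 ω' ∂P}).toReal ^ (n + 1)) *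
          variance (X 0) P / 2 ≤
      ∫ ω, (univ.sup' univ_nonempty fun i => X i ω) ∂P := by
  classical
  set μ : ℝ := ∫ ω', X 0 ω' ∂P with hμdef
  -- basic facts
  have hbound : ∀ i ω, |X i ω| ≤ 1 := by
    intro i ω
    rcases hrange i ω with ⟨h0, h1⟩
    rw [abs_le]; constructor <;> linarith
  have hint : ∀ i, Integrable (X i) P := fun i =>
    (integrable_const (1 : ℝ)).mono' (hmeas i).aestronglyMeasurable
      (Filter.Eventually.of_forall fun ω => by simpa using hbound i ω)
  have hμ0 : 0 ≤ μ := integral_nonneg fun ω => (hrange 0 ω).1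
  have hμ1 : μ ≤ 1 := by
    calc μ ≤ ∫ _, (1 : ℝ) ∂P :=
          integral_mono (hint 0) (integrable_const 1) fun ω => (hrange 0 ω).2
      _ = 1 := by simp
  set Z : Ω → ℝ := fun ω => max (μ - X 0 ω) 0 with hZdef
  have hZm : Measurable Z := (measurable_const.sub (hmeas 0)).max measurable_const
  have hZ0 : ∀ ω, 0 ≤ Z ω := fun ω => le_max_right _ _
  have hZ1 : ∀ ω, Z ω ≤ 1 := by
    intro ω
    have := (hrange 0 ω).1
    simp only [hZdef, max_le_iff]
    constructor <;> linarith
  have hZint : Integrable Z P :=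
    (integrable_const (1 : ℝ)).mono' hZm.aestronglyMeasurable
      (Filter.Eventually.of_forall fun ω => by
        rw [Real.norm_eq_abs, abs_of_nonneg (hZ0 ω)]; exact hZ1 ω)
  have hY0 : ∫ ω, (X 0 ω - μ) ∂P = 0 := by
    rw [integral_sub (hint 0) (integrable_const μ), integral_const]
    simp [hμdef]
  have hm2 : MemLp (X 0) 2 P :=
    (memLp_top_of_bound (hmeas 0).aestronglyMeasurable 1
      (Filter.Eventually.of_forall fun ω => by simpa using hbound 0 ω)).mono_exponent
      le_top
  have hvar : variance (X 0) P = ∫ ω, (X 0 ω - μ) ^ 2 ∂P := by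
    rw [variance_eq_integral (hmeas 0).aemeasurable]
  -- E Z ≥ c / 2
  have habs : ∀ ω, |X 0 ω - μ| = (X 0 ω - μ) + 2 * Z ω := by
    intro ω
    rcases le_total μ (X 0 ω) with h | h
    · rw [abs_of_nonneg (by linarith), hZdef]
      simp only [max_eq_right (by linarith : μ - X 0 ω ≤ 0)]; ring
    · rw [abs_of_nonpos (by linarith), hZdef]
      simp only [max_eq_left (by linarith : (0:ℝ) ≤ μ - X 0 ω)]; ring
  have habsint : Integrable (fun ω => |X 0 ω - μ|) P := ((hint 0).sub (integrable_const μ)).abs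
  have hEZhalf : variance (X 0) P ≤ 2 * ∫ ω, Z ω ∂P := by
    have h1 : ∫ ω, |X 0 ω - μ| ∂P = 2 * ∫ ω, Z ω ∂P := by
      calc ∫ ω, |X 0 ω - μ| ∂P = ∫ ω, ((X 0 ω - μ) + 2 * Z ω) ∂P := by
            exact integral_congr_ae (Filter.Eventually.of_forall habs)
        _ = (∫ ω, (X 0 ω - μ) ∂P) + ∫ ω, 2 * Z ω ∂P :=
            integral_add ((hint 0).sub (integrable_const μ)) (hZint.const_mul 2)
        _ = 2 * ∫ ω, Z ω ∂P := by rw [hY0, integral_const_mul]; ring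
    have h2 : ∫ ω, (X 0 ω - μ) ^ 2 ∂P ≤ ∫ ω, |X 0 ω - μ| ∂P := by
      apply integral_mono (by
        simpa [hvar] using (hm2.sub (memLp_const μ)).integrable_sq) habsint
      intro ω
      have h3 : |X 0 ω - μ| ≤ 1 := by
        have := (hrange 0 ω).1; have := (hrange 0 ω).2
        rw [abs_le]; constructor <;> linarith
      show (X 0 ω - μ) ^ 2 ≤ |X 0 ω - μ|
      nlinarith [sq_abs (X 0 ω - μ), mul_nonneg (abs_nonneg (X 0 ω - μ)) (sub_nonneg.2 h3)]
    rw [← h1]; rw [hvar]; exact h2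
  -- p > 0 and p < 1
  haveI : (MeasureTheory.ae P).NeBot := ae_neBot.2 (IsProbabilityMeasure.ne_zero P)
  have hsm : MeasurableSet {ω | X 0 ω < μ} := measurableSet_lt (hmeas 0) measurable_const
  have hne : ¬ ((fun ω => X 0 ω - μ) =ᵐ[P] fun _ => 0) := by
    intro h
    have hz : variance (X 0) P = 0 := by
      rw [hvar]
      have h2 : (fun ω => (X 0 ω - μ) ^ 2) =ᵐ[P] fun _ => 0 :=
        h.mono fun ω hω => by simp only at hω ⊢; rw [hω]; ring
      rw [integral_congr_ae h2, integral_zero]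
    linarith
  have hppos : 0 < (P {ω | X 0 ω < μ}).toReal := by
    rcases eq_or_ne (P {ω | X 0 ω < μ}) 0 with h0 | h0
    · exfalso
      have hae : ∀ᵐ ω ∂P, μ ≤ X 0 ω := by
        have h2 : ∀ᵐ ω ∂P, ¬ (X 0 ω < μ) := by
          rw [ae_iff]; simpa using h0
        exact h2.mono fun ω h => not_lt.1 h
      exact hne ((integral_eq_zero_iff_of_nonneg_ae
        (hae.mono fun ω h => sub_nonneg.2 h)
        ((hint 0).sub (integrable_const μ))).1 hY0)
    · exact ENNReal.toReal_pos h0 (measure_ne_top P _)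
  have hplt : (P {ω | X 0 ω < μ}).toReal < 1 := by
    rcases eq_or_ne (P {ω | X 0 ω < μ}) 1 with h1 | h1
    · exfalso
      have hae : ∀ᵐ ω ∂P, X 0 ω < μ := by
        rw [ae_iff]
        have h2 := (prob_compl_eq_zero_iff hsm).2 h1
        simpa [Set.compl_setOf] using h2
      have h0 : ∫ ω, (μ - X 0 ω) ∂P = 0 := by
        rw [integral_sub (integrable_const μ) (hint 0), integral_const]
        simp [hμdef]
      have hz := (integral_eq_zero_iff_of_nonneg_ae
        (hae.mono fun ω h => sub_nonneg.2 h.le)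
        ((integrable_const μ).sub (hint 0))).1 h0
      obtain ⟨ω, h, h'⟩ := (hz.and hae).exists
      simp only [Pi.zero_apply] at h
      linarith
    · have h2 := (ENNReal.toReal_lt_toReal (measure_ne_top P _) ENNReal.one_ne_top).2
        (lt_of_le_of_ne prob_le_one h1)
      simpa using h2
  -- the intersection set B over indices ≠ 0
  set Tf : Finset (Fin (n + 1)) := {0}ᶜ with hTf
  have hTcard : Tf.card = n := by
    simp [hTf, Finset.card_compl]
  set B : Set Ω := ⋂ i ∈ Tf, {ω | X i ω < μ} with hB
  have hBm : MeasurableSet B := by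
    apply MeasurableSet.biInter (Tf : Set (Fin (n + 1))).to_countable
    exact fun i _ => measurableSet_lt (hmeas i) measurable_const
  have hmemB : ∀ ω, ω ∈ B ↔ ∀ i ∈ Tf, X i ω < μ := by
    intro ω
    simp [hB, Set.mem_iInter₂]
  have hPi : ∀ i, P {ω | X i ω < μ} = P {ω | X 0 ω < μ} := by
    intro i
    show P (X i ⁻¹' Set.Iio μ) = P (X 0 ⁻¹' Set.Iio μ)
    rw [← Measure.map_apply (hmeas i) measurableSet_Iio,
      ← Measure.map_apply (hmeas 0) measurableSet_Iio, hident i]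
  have hPB : P B = (P {ω | X 0 ω < μ}) ^ n := by
    rw [hB, hindep.meas_biInter (S := Tf) (s := fun i => {ω | X i ω < μ})
      (fun i _ => ⟨Set.Iio μ, measurableSet_Iio, rfl⟩)]
    rw [Finset.prod_congr rfl (fun i _ => hPi i), Finset.prod_const, hTcard]
  have hPBr : (P B).toReal = (P {ω | X 0 ω < μ}).toReal ^ n := by
    rw [hPB, ENNReal.toReal_pow]
  -- the indicator of B, and independence of Z and W
  set W : Ω → ℝ := Set.indicator B (fun _ => (1 : ℝ)) with hW
  have hWm : Measurable W := measurable_const.indicator hBm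
  have hW0 : ∀ ω, 0 ≤ W ω := fun ω => Set.indicator_nonneg (fun _ _ => zero_le_one) ω
  have hW1 : ∀ ω, W ω ≤ 1 := by
    intro ω
    by_cases hω : ω ∈ B
    · rw [hW, Set.indicator_of_mem hω]
    · rw [hW, Set.indicator_of_notMem hω]; exact zero_le_one
  have hWint : Integrable W P :=
    (integrable_const (1 : ℝ)).mono' hWm.aestronglyMeasurable
      (Filter.Eventually.of_forall fun ω => by
        rw [Real.norm_eq_abs, abs_of_nonneg (hW0 ω)]; exact hW1 ω)
  have hindZW : IndepFun Z W P := by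
    have h := hindep.indepFun_finset {0} ({0}ᶜ) disjoint_compl_right hmeas
    have hφ : Measurable (fun v : (({0} : Finset (Fin (n + 1))) → ℝ) =>
        max (μ - v ⟨0, by simp⟩) 0) :=
      (measurable_const.sub (measurable_pi_apply _)).max measurable_const
    have hψ : Measurable (fun v : ((({0} : Finset (Fin (n + 1)))ᶜ : Finset (Fin (n + 1))) → ℝ) =>
        ∏ i, Set.indicator (Set.Iio μ) (fun _ => (1 : ℝ)) (v i)) :=
      Finset.measurable_prod _ fun i _ =>
        (measurable_const.indicator measurableSet_Iio).comp (measurable_pi_apply i)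
    have h2 := h.comp hφ hψ
    have hZeq : (fun v : (({0} : Finset (Fin (n + 1))) → ℝ) =>
        max (μ - v ⟨0, by simp⟩) 0) ∘ (fun a (i : ({0} : Finset (Fin (n + 1)))) => X i a) = Z :=
      rfl
    have hWeq : (fun v : ((({0} : Finset (Fin (n + 1)))ᶜ : Finset (Fin (n + 1))) → ℝ) =>
        ∏ i, Set.indicator (Set.Iio μ) (fun _ => (1 : ℝ)) (v i)) ∘
        (fun a (i : ((({0} : Finset (Fin (n + 1)))ᶜ : Finset (Fin (n + 1))))) => X i a) = W := by
      funext ω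
      simp only [Function.comp_apply]
      by_cases hω : ω ∈ B
      · have h1 : W ω = 1 := by rw [hW]; exact Set.indicator_of_mem hω _
        rw [h1]
        exact Finset.prod_eq_one fun i _ =>
          Set.indicator_of_mem (Set.mem_Iio.2 ((hmemB ω).1 hω i.1 i.2)) _
      · obtain ⟨i, hiT, hiX⟩ : ∃ i ∈ Tf, ¬ X i ω < μ := by
          by_contra hcon
          push_neg at hcon
          exact hω ((hmemB ω).2 hcon)
        have h1 : W ω = 0 := by rw [hW]; exact Set.indicator_of_notMem hω _
        rw [h1]
        exact Finset.prod_eq_zero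
          (Finset.mem_univ (⟨i, hiT⟩ : {x // x ∈ ({0} : Finset (Fin (n + 1)))ᶜ}))
          (Set.indicator_of_notMem (fun hmem => hiX (Set.mem_Iio.1 hmem)) _)
    rw [hZeq, hWeq] at h2
    exact h2
  have hZWint : Integrable (fun ω => Z ω * W ω) P :=
    (integrable_const (1 : ℝ)).mono' (hZm.mul hWm).aestronglyMeasurable
      (Filter.Eventually.of_forall fun ω => by
        rw [Real.norm_eq_abs, abs_of_nonneg (mul_nonneg (hZ0 ω) (hW0 ω))]
        calc Z ω * W ω ≤ 1 * 1 := mul_le_mul (hZ1 ω) (hW1 ω) (hW0 ω) zero_le_one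
          _ = 1 := one_mul 1)
  have hmul : ∫ ω, Z ω * W ω ∂P = (∫ ω, Z ω ∂P) * ∫ ω, W ω ∂P :=
    IndepFun.integral_fun_mul_eq_mul_integral hindZW hZint.aestronglyMeasurable hWint.aestronglyMeasurable
  have hIW : ∫ ω, W ω ∂P = (P B).toReal := by
    rw [hW, integral_indicator_const _ hBm]; simp; rfl
  -- pointwise inequality
  have hpt : ∀ ω, X 0 ω + Z ω - Z ω * W ω ≤ univ.sup' univ_nonempty (fun i => X i ω) := by
    intro ω
    by_cases hω : ω ∈ B
    · rw [hW, Set.indicator_of_mem hω, mul_one]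
      have : X 0 ω ≤ univ.sup' univ_nonempty (fun i => X i ω) :=
        Finset.le_sup' (fun i => X i ω) (Finset.mem_univ 0)
      linarith
    · rw [hW, Set.indicator_of_notMem hω, mul_zero, sub_zero]
      obtain ⟨i, hiT, hiX⟩ : ∃ i ∈ Tf, ¬ X i ω < μ := by
        by_contra hcon
        push_neg at hcon
        exact hω ((hmemB ω).2 hcon)
      push_neg at hiX
      have hsup : X i ω ≤ univ.sup' univ_nonempty (fun i => X i ω) :=
        Finset.le_sup' (fun i => X i ω) (Finset.mem_univ i)
      have hsup0 : X 0 ω ≤ univ.sup' univ_nonempty (fun i => X i ω) :=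
        Finset.le_sup' (fun i => X i ω) (Finset.mem_univ 0)
      rcases le_total (μ - X 0 ω) 0 with h | h
      · have hZz : Z ω = 0 := max_eq_right h
        rw [hZz]
        linarith
      · have hZz : Z ω = μ - X 0 ω := max_eq_left h
        rw [hZz]
        linarith
  -- integrate
  have hadd : Integrable (fun ω => X 0 ω + Z ω) P := (hint 0).add hZint
  have hLint : Integrable (fun ω => X 0 ω + Z ω - Z ω * W ω) P := hadd.sub hZWint
  have hsupm : Measurable (fun ω => univ.sup' univ_nonempty (fun i => X i ω)) := by
    have h := Finset.measurable_sup' (univ_nonempty (α := Fin (n + 1))) (fun i _ => hmeas i)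
    have heq : (univ.sup' univ_nonempty fun i => X i) =
        fun ω => univ.sup' univ_nonempty (fun i => X i ω) := by
      funext ω
      exact Finset.sup'_apply _ _ _
    rwa [heq] at h
  have hsupint : Integrable (fun ω => univ.sup' univ_nonempty fun i => X i ω) P :=
    (integrable_const (1 : ℝ)).mono' hsupm.aestronglyMeasurable
      (Filter.Eventually.of_forall fun ω => by
        rw [Real.norm_eq_abs, abs_le]
        constructor
        · exact le_trans (by linarith [(hrange 0 ω).1])
            (Finset.le_sup' (fun i => X i ω) (Finset.mem_univ 0))
        · exact Finset.sup'_le _ _ fun i _ => (hrange i ω).2)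
  have hmono := integral_mono hLint hsupint hpt
  have hcomp : ∫ ω, (X 0 ω + Z ω - Z ω * W ω) ∂P
      = μ + (∫ ω, Z ω ∂P) - (∫ ω, Z ω ∂P) * (P {ω | X 0 ω < μ}).toReal ^ n := by
    rw [integral_sub hadd hZWint, integral_add (hint 0) hZint, hmul, hIW, hPBr, ← hμdef]
  refine ⟨⟨hppos, hplt⟩, ?_⟩
  have hEZ : variance (X 0) P / 2 ≤ ∫ ω, Z ω ∂P := by linarith
  have hp0 : (0:ℝ) ≤ (P {ω | X 0 ω < μ}).toReal := ENNReal.toReal_nonneg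
  have hpn : (P {ω | X 0 ω < μ}).toReal ^ n ≤ 1 := pow_le_one₀ hp0 hplt.le
  have hEZ0 : 0 ≤ ∫ ω, Z ω ∂P := integral_nonneg hZ0
  calc μ + ((P {ω | X 0 ω < μ}).toReal - (P {ω | X 0 ω < μ}).toReal ^ (n + 1)) *
        variance (X 0) P / 2
      ≤ μ + (∫ ω, Z ω ∂P) - (∫ ω, Z ω ∂P) * (P {ω | X 0 ω < μ}).toReal ^ n := by
        nlinarith [pow_succ (P {ω | X 0 ω < μ}).toReal n,
          mul_nonneg (sub_nonneg.2 hpn) (sub_nonneg.2 hEZ),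
          mul_nonneg (mul_nonneg (sub_nonneg.2 hplt.le) (sub_nonneg.2 hpn)) hc.le]
    _ = ∫ ω, (X 0 ω + Z ω - Z ω * W ω) ∂P := hcomp.symm
    _ ≤ ∫ ω, (univ.sup' univ_nonempty fun i => X i ω) ∂P := hmono
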